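/- Let λ ∈ ℂ with Re λ ≥ 0, and let a_n(λ) be the d = 3 sequence defined by a_{−1} = 0, a_0 = 1, a_{n+2} = A_n(λ)·a_{n+1} + B_n(λ)·a_n with A_n(λ) = (12n² + (8λ+56)n + λ² + 20λ + 56)/(8n² + 52n + 72) and B_n(λ) = −(4n² + (4λ+12)n + λ² + 6λ + 8)/(8n² + 52n + 72). Then there exists N such that a_n(λ) ≠ 0 for all n ≥ N, and r_n(λ) = a_{n+1}(λ)/a_n(λ) converges as n → ∞ either to 1 or to 1/2. -/

import Mathlib

open Filter

/-- The `d = 3` recurrence coefficient `A_n(λ)`. -/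
noncomputable def A3 (lam : ℂ) (n : ℤ) : ℂ :=
  (12 * (n : ℂ) ^ 2 + (8 * lam + 56) * (n : ℂ) + lam ^ 2 + 20 * lam + 56)
    / (8 * (n : ℂ) ^ 2 + 52 * (n : ℂ) + 72)

/-- The `d = 3` recurrence coefficient `B_n(λ)`. -/
noncomputable def B3 (lam : ℂ) (n : ℤ) : ℂ :=
  -(4 * (n : ℂ) ^ 2 + (4 * lam + 12) * (n : ℂ) + lam ^ 2 + 6 * lam + 8)
    / (8 * (n : ℂ) ^ 2 + 52 * (n : ℂ) + 72)

lemma inv_tendsto : Tendsto (fun n : ℕ => ((n:ℂ))⁻¹) atTop (nhds 0) := by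
  have h : Tendsto (fun n : ℕ => 1/(n:ℝ)) atTop (nhds 0) := tendsto_one_div_atTop_nhds_zero_nat
  have h2 := (Complex.continuous_ofReal.tendsto 0).comp h
  have : (Complex.ofReal ∘ fun n : ℕ => 1/(n:ℝ)) = fun n : ℕ => ((n:ℂ))⁻¹ := by
    funext n; simp [Function.comp, one_div]
  rw [this] at h2; simpa using h2

lemma den_ne (n : ℕ) : (8 * ((n:ℤ) : ℂ) ^ 2 + 52 * ((n:ℤ) : ℂ) + 72) ≠ 0 := by
  have h : ((8 * n^2 + 52 * n + 72 : ℕ) : ℂ) ≠ 0 := by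
    exact Nat.cast_ne_zero.mpr (by omega)
  intro h0; apply h; push_cast at h0 ⊢; linear_combination h0

lemma A3_tendsto (lam : ℂ) :
    Tendsto (fun n : ℕ => A3 lam n) atTop (nhds (3/2)) := by
  have hnum : Tendsto (fun n : ℕ => 12 + (8*lam+56) * ((n:ℂ))⁻¹ + (lam^2+20*lam+56) * ((n:ℂ))⁻¹^2)
      atTop (nhds 12) := by
    have := (inv_tendsto.const_mul (8*lam+56)).const_add 12
    have h2 := ((inv_tendsto.pow 2).const_mul (lam^2+20*lam+56))
    simpa using this.add h2
  have hden : Tendsto (fun n : ℕ => 8 + 52 * ((n:ℂ))⁻¹ + 72 * ((n:ℂ))⁻¹^2)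
      atTop (nhds 8) := by
    have := (inv_tendsto.const_mul (52:ℂ)).const_add 8
    have h2 := ((inv_tendsto.pow 2).const_mul (72:ℂ))
    simpa using this.add h2
  have h := hnum.div hden (by norm_num)
  have heq : ∀ n : ℕ, 1 ≤ n → (fun n : ℕ => (12 + (8*lam+56) * ((n:ℂ))⁻¹ + (lam^2+20*lam+56) * ((n:ℂ))⁻¹^2) / (8 + 52 * ((n:ℂ))⁻¹ + 72 * ((n:ℂ))⁻¹^2)) n = A3 lam n := by
    intro n hn
    have hn0 : ((n:ℂ)) ≠ 0 := by exact_mod_cast Nat.cast_ne_zero.mpr (by omega)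
    have hd := den_ne n
    simp only [A3]
    rw [div_eq_div_iff]
    · push_cast; field_simp; ring
    · intro h0
      apply hd
      have : (8 * ((n:ℤ):ℂ)^2 + 52 * ((n:ℤ):ℂ) + 72) = (8 + 52 * ((n:ℂ))⁻¹ + 72 * ((n:ℂ))⁻¹^2) * (n:ℂ)^2 := by
        push_cast; field_simp
      rw [this, h0, zero_mul]
    · exact_mod_cast den_ne n
  have : (12:ℂ)/8 = 3/2 := by norm_num
  rw [this] at h
  exact h.congr' (eventually_atTop.mpr ⟨1, heq⟩)

lemma B3_tendsto (lam : ℂ) :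
    Tendsto (fun n : ℕ => B3 lam n) atTop (nhds (-(1/2))) := by
  have hnum : Tendsto (fun n : ℕ => -(4 + (4*lam+12) * ((n:ℂ))⁻¹ + (lam^2+6*lam+8) * ((n:ℂ))⁻¹^2))
      atTop (nhds (-4)) := by
    have := (inv_tendsto.const_mul (4*lam+12)).const_add 4
    have h2 := ((inv_tendsto.pow 2).const_mul (lam^2+6*lam+8))
    simpa using (this.add h2).neg
  have hden : Tendsto (fun n : ℕ => 8 + 52 * ((n:ℂ))⁻¹ + 72 * ((n:ℂ))⁻¹^2)
      atTop (nhds 8) := by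
    have := (inv_tendsto.const_mul (52:ℂ)).const_add 8
    have h2 := ((inv_tendsto.pow 2).const_mul (72:ℂ))
    simpa using this.add h2
  have h := hnum.div hden (by norm_num)
  have heq : ∀ n : ℕ, 1 ≤ n → (fun n : ℕ => (-(4 + (4*lam+12) * ((n:ℂ))⁻¹ + (lam^2+6*lam+8) * ((n:ℂ))⁻¹^2)) / (8 + 52 * ((n:ℂ))⁻¹ + 72 * ((n:ℂ))⁻¹^2)) n = B3 lam n := by
    intro n hn
    have hn0 : ((n:ℂ)) ≠ 0 := by exact Nat.cast_ne_zero.mpr (by omega)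
    have hd := den_ne n
    simp only [B3]
    rw [div_eq_div_iff]
    · push_cast; field_simp; ring
    · intro h0
      apply hd
      have : (8 * ((n:ℤ):ℂ)^2 + 52 * ((n:ℤ):ℂ) + 72) = (8 + 52 * ((n:ℂ))⁻¹ + 72 * ((n:ℂ))⁻¹^2) * (n:ℂ)^2 := by
        push_cast; field_simp
      rw [this, h0, zero_mul]
    · exact_mod_cast den_ne n
  have : (-4:ℂ)/8 = -(1/2) := by norm_num
  rw [this] at h
  exact h.congr' (eventually_atTop.mpr ⟨1, heq⟩)

lemma B3_ne (lam : ℂ) (hre : 0 ≤ lam.re) (n : ℕ) : B3 lam n ≠ 0 := by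
  rw [B3, div_ne_zero_iff]
  constructor
  · rw [neg_ne_zero]
    have hfac : (4 * ((n:ℤ):ℂ)^2 + (4*lam+12) * ((n:ℤ):ℂ) + lam^2 + 6*lam + 8)
        = (2*((n:ℤ):ℂ) + lam + 2) * (2*((n:ℤ):ℂ) + lam + 4) := by push_cast; ring
    rw [hfac]
    apply mul_ne_zero
    · intro h
      have := congrArg Complex.re h
      push_cast at this
      simp [Complex.add_re, Complex.mul_re] at this
      have hn : (0:ℝ) ≤ (n:ℝ) := Nat.cast_nonneg n
      linarith
    · intro h
      have := congrArg Complex.re h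
      push_cast at this
      simp [Complex.add_re, Complex.mul_re] at this
      have hn : (0:ℝ) ≤ (n:ℝ) := Nat.cast_nonneg n
      linarith
  · exact den_ne n


def StepEst (x y : ℕ → ℂ) (ε : ℝ) (n : ℕ) : Prop :=
  ‖x (n+1) - x n‖ ≤ ε * (‖x n‖ + ‖y n‖) ∧ ‖y (n+1) - (1/2 : ℂ) * y n‖ ≤ ε * (‖x n‖ + ‖y n‖)

lemma caseA_inv (x y : ℕ → ℂ) (ε : ℝ) (hε : 0 < ε) (hε40 : ε ≤ 1/40) (n₀ : ℕ)
    (hstep : ∀ n ≥ n₀, StepEst x y ε n)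
    (h0 : ‖y n₀‖ ≤ ‖x n₀‖) (hx0 : x n₀ ≠ 0) :
    ∀ k, x (n₀+k) ≠ 0 ∧ ‖y (n₀+k)‖ ≤ max (20*ε) ((7/10 : ℝ)^k) * ‖x (n₀+k)‖ := by
  intro k
  induction k with
  | zero =>
    simp only [Nat.add_zero]
    refine ⟨hx0, ?_⟩
    have h1 : (1:ℝ) ≤ max (20*ε) ((7/10:ℝ)^0) := by simp
    nlinarith [norm_nonneg (x n₀), norm_nonneg (y n₀)]
  | succ k ih =>
    obtain ⟨hxne, hyx⟩ := ih
    set n := n₀ + k with hn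
    set m : ℝ := max (20*ε) ((7/10:ℝ)^k) with hm
    have hm1 : m ≤ 1 := by
      apply max_le
      · linarith
      · exact pow_le_one₀ (by norm_num) (by norm_num)
    have hm0 : 0 < m := lt_of_lt_of_le (by linarith) (le_max_left _ _)
    have hX : 0 < ‖x n‖ := norm_pos_iff.mpr hxne
    obtain ⟨hsx, hsy⟩ := hstep n (Nat.le_add_right _ _)
    have hY : (0:ℝ) ≤ ‖y n‖ := norm_nonneg _
    have hyx1 : ‖y n‖ ≤ ‖x n‖ := by nlinarith
    have hx' : ‖x (n+1)‖ ≥ (1 - 2*ε) * ‖x n‖ := by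
      have h1 : ‖x n‖ - ‖x (n+1)‖ ≤ ‖x (n+1) - x n‖ := by
        have := norm_sub_norm_le (x n) (x (n+1))
        have h2 : ‖x n - x (n+1)‖ = ‖x (n+1) - x n‖ := norm_sub_rev _ _
        linarith
      nlinarith [mul_le_mul_of_nonneg_left hyx1 hε.le]
    have hx'pos : 0 < ‖x (n+1)‖ := by nlinarith
    have hy' : ‖y (n+1)‖ ≤ (1/2) * ‖y n‖ + ε * (‖x n‖ + ‖y n‖) := by
      have h1 : ‖y (n+1)‖ - ‖(1/2 : ℂ) * y n‖ ≤ ‖y (n+1) - (1/2 : ℂ) * y n‖ :=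
        norm_sub_norm_le _ _
      have h2 : ‖(1/2 : ℂ) * y n‖ = (1/2) * ‖y n‖ := by
        rw [norm_mul]; norm_num
      linarith
    have hy'' : ‖y (n+1)‖ ≤ (m/2 + 2*ε) * ‖x n‖ := by
      nlinarith [mul_le_mul_of_nonneg_left hyx1 hε.le]
    set m' : ℝ := max (20*ε) ((7/10:ℝ)^(k+1)) with hm'
    have key : m/2 + 2*ε ≤ m' * (1 - 2*ε) := by
      rcases le_total m (20*ε) with h | h
      · have h1 : 20*ε ≤ m' := le_max_left _ _
        nlinarith
      · have h2 : (7/10) * m ≤ m' := by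
          rcases max_choice (20*ε) ((7/10:ℝ)^k) with hc | hc
          · rw [← hm] at hc; rw [hc] at h ⊢
            calc (7/10) * (20*ε) ≤ 20*ε := by nlinarith
              _ ≤ m' := le_max_left _ _
          · rw [← hm] at hc; rw [hc]
            calc (7/10) * (7/10:ℝ)^k = (7/10:ℝ)^(k+1) := by ring
              _ ≤ m' := le_max_right _ _
        nlinarith
    have hfin : ‖y (n+1)‖ ≤ m' * ‖x (n+1)‖ := by
      have hm'0 : 0 ≤ m' := le_trans (by linarith) (le_max_left _ _)
      calc ‖y (n+1)‖ ≤ (m/2 + 2*ε) * ‖x n‖ := hy''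
        _ ≤ (m' * (1 - 2*ε)) * ‖x n‖ := by nlinarith
        _ ≤ m' * ‖x (n+1)‖ := by nlinarith
    have hidx : n₀ + (k+1) = n + 1 := by omega
    rw [hidx]
    exact ⟨norm_pos_iff.mp hx'pos, hfin⟩

lemma caseA (x y : ℕ → ℂ)
    (hbnd : ∀ ε : ℝ, 0 < ε → ∃ N, ∀ n ≥ N, StepEst x y ε n)
    (hfreq : ∀ m, ∃ n, n ≥ m ∧ ‖y n‖ ≤ ‖x n‖)
    (hnz : ∀ n, ¬(x n = 0 ∧ y n = 0)) :
    (∃ N, ∀ n ≥ N, x n ≠ 0 ∧ ‖y n‖ ≤ ‖x n‖) ∧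
      Tendsto (fun n => y n / x n) atTop (nhds 0) := by
  have hx_of : ∀ n, ‖y n‖ ≤ ‖x n‖ → x n ≠ 0 := by
    intro n hle hx0
    apply hnz n
    refine ⟨hx0, ?_⟩
    rw [hx0] at hle; simp at hle
    exact norm_le_zero_iff.mp (by simpa using hle)
  obtain ⟨N₁, hN₁⟩ := hbnd (1/40) (by norm_num)
  obtain ⟨n₀, hn₀N, hn₀⟩ := hfreq N₁
  have hstep₁ : ∀ n ≥ n₀, StepEst x y (1/40) n := fun n hn => hN₁ n (le_trans hn₀N hn)
  have hinv₁ := caseA_inv x y (1/40) (by norm_num) le_rfl n₀ hstep₁ hn₀ (hx_of n₀ hn₀)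
  have hpers : ∀ n ≥ n₀, x n ≠ 0 ∧ ‖y n‖ ≤ ‖x n‖ := by
    intro n hn
    obtain ⟨k, rfl⟩ := Nat.exists_eq_add_of_le hn
    obtain ⟨h1, h2⟩ := hinv₁ k
    refine ⟨h1, le_trans h2 ?_⟩
    have hmax : max (20*(1/40 : ℝ)) ((7/10:ℝ)^k) ≤ 1 := by
      apply max_le
      · norm_num
      · exact pow_le_one₀ (by norm_num) (by norm_num)
    nlinarith [norm_nonneg (x (n₀+k))]
  refine ⟨⟨n₀, hpers⟩, ?_⟩
  rw [Metric.tendsto_atTop]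
  intro ε' hε'
  set ε : ℝ := min (ε'/21) (1/40) with hεdef
  have hε : 0 < ε := lt_min (by linarith) (by norm_num)
  have hε40 : ε ≤ 1/40 := min_le_right _ _
  obtain ⟨N₂, hN₂⟩ := hbnd ε hε
  set N₃ := max n₀ N₂ with hN₃
  have hstep₂ : ∀ n ≥ N₃, StepEst x y ε n := fun n hn => hN₂ n (le_trans (le_max_right _ _) hn)
  obtain ⟨hx₃, hy₃⟩ := hpers N₃ (le_max_left _ _)
  have hinv₂ := caseA_inv x y ε hε hε40 N₃ hstep₂ hy₃ hx₃
  obtain ⟨K, hK⟩ := exists_pow_lt_of_lt_one (show (0:ℝ) < 20*ε by linarith) (show (7/10:ℝ) < 1 by norm_num)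
  refine ⟨N₃ + K, ?_⟩
  intro n hn
  obtain ⟨k, rfl⟩ : ∃ k, n = N₃ + k := ⟨n - N₃, by omega⟩
  have hkK : K ≤ k := by omega
  obtain ⟨hx1, hy1⟩ := hinv₂ k
  have hpow : (7/10:ℝ)^k ≤ (7/10:ℝ)^K :=
    pow_le_pow_of_le_one (by norm_num) (by norm_num) hkK
  have hmax : max (20*ε) ((7/10:ℝ)^k) ≤ 20*ε := max_le le_rfl (by linarith)
  have hXpos : 0 < ‖x (N₃+k)‖ := norm_pos_iff.mpr hx1
  have hbound : ‖y (N₃+k)‖ ≤ 20*ε*‖x (N₃+k)‖ := by nlinarith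
  rw [dist_zero_right, norm_div]
  rw [div_lt_iff₀ hXpos]
  have h21 : 21 * ε ≤ ε' := by
    have := min_le_left (ε'/21) (1/40)
    rw [← hεdef] at this; linarith
  nlinarith


lemma caseB (x y : ℕ → ℂ)
    (hbnd : ∀ ε : ℝ, 0 < ε → ∃ N, ∀ n ≥ N, StepEst x y ε n)
    (m : ℕ) (hlt : ∀ n ≥ m, ‖x n‖ < ‖y n‖) :
    Tendsto (fun n => x n / y n) atTop (nhds 0) := by
  rw [Metric.tendsto_atTop]
  intro ε' hε'
  set ε : ℝ := min (ε'/21) (1/40) with hεdef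
  have hε : 0 < ε := lt_min (by linarith) (by norm_num)
  have hε40 : ε ≤ 1/40 := min_le_right _ _
  obtain ⟨N₂, hN₂⟩ := hbnd ε hε
  refine ⟨max m N₂, ?_⟩
  have claim : ∀ n ≥ max m N₂, ‖x n‖ ≤ 20*ε*‖y n‖ := by
    by_contra hcon
    push_neg at hcon
    obtain ⟨n₁, hn₁N, hn₁⟩ := hcon
    have hn₁m : n₁ ≥ m := le_trans (le_max_left _ _) hn₁N
    have hY₁ : 0 < ‖y n₁‖ := lt_of_le_of_lt (norm_nonneg _) (hlt n₁ hn₁m)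
    have hX₁ : 0 ≤ ‖x n₁‖ := norm_nonneg _
    have grow : ∀ k, (3/2:ℝ)^k * ‖x n₁‖ * ‖y (n₁+k)‖ ≤ ‖x (n₁+k)‖ * ‖y n₁‖ := by
      intro k
      induction k with
      | zero => simp
      | succ k ih =>
        set n := n₁ + k with hn'
        have hnm : n ≥ m := le_trans hn₁m (Nat.le_add_right _ _)
        have hXY : ‖x n‖ < ‖y n‖ := hlt n hnm
        have hX : (0:ℝ) ≤ ‖x n‖ := norm_nonneg _
        have hY : 0 < ‖y n‖ := lt_of_le_of_lt hX hXY
        have hpk : (1:ℝ) ≤ (3/2:ℝ)^k := one_le_pow₀ (by norm_num)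
        have hlow : 20*ε*‖y n‖ ≤ ‖x n‖ := by
          have h5 : (20*ε*‖y n‖) * ‖y n₁‖ < ‖x n‖ * ‖y n₁‖ := by
            calc (20*ε*‖y n‖) * ‖y n₁‖ = (20*ε*‖y n₁‖) * ‖y n‖ := by ring
              _ < ‖x n₁‖ * ‖y n‖ := by
                  exact mul_lt_mul_of_pos_right hn₁ hY
              _ ≤ (3/2:ℝ)^k * ‖x n₁‖ * ‖y n‖ := by
                  nlinarith [mul_nonneg hX₁ hY.le]
              _ ≤ ‖x n‖ * ‖y n₁‖ := ih
          exact le_of_lt (lt_of_mul_lt_mul_right h5 hY₁.le)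
        obtain ⟨hsx, hsy⟩ := hN₂ n (le_trans (le_trans (le_max_right _ _) hn₁N) (Nat.le_add_right _ _))
        have hεY : ε * ‖y n‖ ≤ (1/20) * ‖x n‖ := by linarith
        have hεX : ε * ‖x n‖ ≤ (1/40) * ‖x n‖ := mul_le_mul_of_nonneg_right hε40 hX
        have hx' : (9/10) * ‖x n‖ ≤ ‖x (n+1)‖ := by
          have h1 : ‖x n‖ - ‖x (n+1)‖ ≤ ‖x (n+1) - x n‖ := by
            have := norm_sub_norm_le (x n) (x (n+1))
            have h2 : ‖x n - x (n+1)‖ = ‖x (n+1) - x n‖ := norm_sub_rev _ _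
            linarith
          have h3 : ε * (‖x n‖ + ‖y n‖) ≤ (1/40)*‖x n‖ + (1/20)*‖x n‖ := by
            rw [mul_add]; linarith
          linarith
        have hy' : ‖y (n+1)‖ ≤ (11/20) * ‖y n‖ := by
          have h1 : ‖y (n+1)‖ - ‖(1/2 : ℂ) * y n‖ ≤ ‖y (n+1) - (1/2 : ℂ) * y n‖ :=
            norm_sub_norm_le _ _
          have h2 : ‖(1/2 : ℂ) * y n‖ = (1/2) * ‖y n‖ := by rw [norm_mul]; norm_num
          have hεX' : ε * ‖x n‖ ≤ (1/40) * ‖y n‖ := by nlinarith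
          have hεY' : ε * ‖y n‖ ≤ (1/40) * ‖y n‖ := mul_le_mul_of_nonneg_right hε40 hY.le
          have h3 : ε * (‖x n‖ + ‖y n‖) ≤ (1/20)*‖y n‖ := by rw [mul_add]; linarith
          linarith
        have hidx : n₁ + (k+1) = n + 1 := by omega
        rw [hidx]
        calc (3/2:ℝ)^(k+1) * ‖x n₁‖ * ‖y (n+1)‖
            ≤ (3/2:ℝ)^(k+1) * ‖x n₁‖ * ((11/20) * ‖y n‖) := by
              have h0 : (0:ℝ) ≤ (3/2:ℝ)^(k+1) * ‖x n₁‖ := by positivity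
              exact mul_le_mul_of_nonneg_left hy' h0
          _ = (33/40) * ((3/2:ℝ)^k * ‖x n₁‖ * ‖y n‖) := by ring
          _ ≤ (33/40) * (‖x n‖ * ‖y n₁‖) := by linarith
          _ ≤ ((9/10) * ‖x n‖) * ‖y n₁‖ := by nlinarith [mul_nonneg hX hY₁.le]
          _ ≤ ‖x (n+1)‖ * ‖y n₁‖ := mul_le_mul_of_nonneg_right hx' hY₁.le
    obtain ⟨K, hK⟩ := pow_unbounded_of_one_lt (R := ℝ) (1/(20*ε)) (by norm_num : (1:ℝ) < 3/2)
    have hnm : n₁ + K ≥ m := le_trans hn₁m (Nat.le_add_right _ _)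
    have hXY := hlt (n₁+K) hnm
    have hY : 0 < ‖y (n₁+K)‖ := lt_of_le_of_lt (norm_nonneg _) hXY
    have h1 := grow K
    have h3 : ‖y n₁‖ < (3/2:ℝ)^K * ‖x n₁‖ := by
      have h2 : (1/(20*ε)) * (20*ε*‖y n₁‖) < (3/2:ℝ)^K * ‖x n₁‖ :=
        mul_lt_mul'' hK hn₁ (by positivity) (by positivity)
      have h20 : (1/(20*ε)) * (20*ε*‖y n₁‖) = ‖y n₁‖ := by field_simp
      linarith
    nlinarith [mul_lt_mul_of_pos_right h3 hY, mul_lt_mul_of_pos_right hXY hY₁]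
  intro n hn
  have hb := claim n hn
  have hXY := hlt n (le_trans (le_max_left _ _) hn)
  have hY : 0 < ‖y n‖ := lt_of_le_of_lt (norm_nonneg _) hXY
  rw [dist_zero_right, norm_div, div_lt_iff₀ hY]
  have h21 : 21 * ε ≤ ε' := by
    have := min_le_left (ε'/21) (1/40)
    rw [← hεdef] at this; linarith
  nlinarith


lemma dichotomy (x y : ℕ → ℂ)
    (hbnd : ∀ ε : ℝ, 0 < ε → ∃ N, ∀ n ≥ N, StepEst x y ε n)
    (hnz : ∀ n, ¬(x n = 0 ∧ y n = 0)) :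
    (∃ N, ∀ n ≥ N, x n - y n ≠ 0) ∧
      (Tendsto (fun n => (2*x n - y n) / (2*x n - 2*y n)) atTop (nhds 1) ∨
        Tendsto (fun n => (2*x n - y n) / (2*x n - 2*y n)) atTop (nhds (1/2))) := by
  by_cases hB : ∃ m, ∀ n ≥ m, ‖x n‖ < ‖y n‖
  · obtain ⟨m, hm⟩ := hB
    have htend := caseB x y hbnd m hm
    have hyne : ∀ n ≥ m, y n ≠ 0 := fun n hn =>
      norm_pos_iff.mp (lt_of_le_of_lt (norm_nonneg _) (hm n hn))
    have hne : ∀ n ≥ m, x n - y n ≠ 0 := by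
      intro n hn h0
      have h1 := hm n hn
      have h2 : x n = y n := by linear_combination h0
      rw [h2] at h1
      exact absurd h1 (lt_irrefl _)
    refine ⟨⟨m, hne⟩, Or.inr ?_⟩
    have hnum : Tendsto (fun n => 2 * (x n / y n) - 1) atTop (nhds (-1)) := by
      have := (htend.const_mul (2:ℂ)).sub_const 1
      simpa using this
    have hden : Tendsto (fun n => 2 * (x n / y n) - 2) atTop (nhds (-2)) := by
      have := (htend.const_mul (2:ℂ)).sub_const 2
      simpa using this
    have h := hnum.div hden (by norm_num)
    have he : (-1 : ℂ)/(-2) = 1/2 := by norm_num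
    rw [he] at h
    apply h.congr' ?_
    rw [eventuallyEq_iff_exists_mem]
    refine ⟨{n | n ≥ m}, eventually_atTop.mpr ⟨m, fun n hn => hn⟩, ?_⟩
    intro n hn
    have hy := hyne n hn
    have hd : 2 * x n - 2 * y n ≠ 0 := by
      intro h0; exact hne n hn (by linear_combination h0/2)
    have hd2 : 2 * (x n / y n) - 2 ≠ 0 := by
      intro h0
      have h3 : x n / y n = 1 := by linear_combination h0/2
      rw [div_eq_one_iff_eq hy] at h3
      exact hne n hn (by rw [h3]; ring)
    simp only [Pi.div_apply]
    rw [div_eq_div_iff hd2 hd]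
    have hx' : x n / y n * y n = x n := div_mul_cancel₀ _ hy
    linear_combination (-2 : ℂ) * hx'
  · push_neg at hB
    have hfreq : ∀ m, ∃ n, n ≥ m ∧ ‖y n‖ ≤ ‖x n‖ := by
      intro m
      obtain ⟨n, hn1, hn2⟩ := hB m
      exact ⟨n, hn1, hn2⟩
    obtain ⟨⟨N, hN⟩, htend⟩ := caseA x y hbnd hfreq hnz
    have hev : ∃ N₂, ∀ n ≥ N₂, ‖y n / x n‖ < 1/2 := by
      rw [Metric.tendsto_atTop] at htend
      obtain ⟨N₂, hN₂⟩ := htend (1/2) (by norm_num)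
      exact ⟨N₂, fun n hn => by simpa [dist_zero_right] using hN₂ n hn⟩
    obtain ⟨N₂, hN₂⟩ := hev
    set N₃ := max N N₂ with hN₃
    have hfacts : ∀ n ≥ N₃, x n ≠ 0 ∧ x n - y n ≠ 0 ∧ 2*x n - 2*y n ≠ 0 := by
      intro n hn
      obtain ⟨hx0, _⟩ := hN n (le_trans (le_max_left _ _) hn)
      have hX : 0 < ‖x n‖ := norm_pos_iff.mpr hx0
      have h2 := hN₂ n (le_trans (le_max_right _ _) hn)
      rw [norm_div, div_lt_iff₀ hX] at h2
      have hne : x n - y n ≠ 0 := by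
        intro h0
        have h3 : x n = y n := by linear_combination h0
        rw [h3] at h2 hX
        linarith
      refine ⟨hx0, hne, ?_⟩
      intro h0; exact hne (by linear_combination h0/2)
    refine ⟨⟨N₃, fun n hn => (hfacts n hn).2.1⟩, Or.inl ?_⟩
    have hnum : Tendsto (fun n => 2 - y n / x n) atTop (nhds 2) := by
      have := (htend.const_sub (2:ℂ))
      simpa using this
    have hden : Tendsto (fun n => 2 - 2 * (y n / x n)) atTop (nhds 2) := by
      have := ((htend.const_mul (2:ℂ)).const_sub 2)
      simpa using this
    have h := hnum.div hden (by norm_num)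
    have he : (2 : ℂ)/2 = 1 := by norm_num
    rw [he] at h
    apply h.congr' ?_
    rw [eventuallyEq_iff_exists_mem]
    refine ⟨{n | n ≥ N₃}, eventually_atTop.mpr ⟨N₃, fun n hn => hn⟩, ?_⟩
    intro n hn
    obtain ⟨hx0, hne, hd⟩ := hfacts n hn
    have hd2 : 2 - 2 * (y n / x n) ≠ 0 := by
      intro h0
      have h3 : y n / x n = 1 := by linear_combination -h0/2
      rw [div_eq_one_iff_eq hx0] at h3
      exact hne (by rw [h3]; ring)
    simp only [Pi.div_apply]
    rw [div_eq_div_iff hd2 hd]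
    have hx' : y n / x n * x n = y n := div_mul_cancel₀ _ hx0
    linear_combination (2 : ℂ) * hx'

/-- Poincaré dichotomy in the `d = 3` case: the `aₙ(λ)` are eventually nonzero and the
ratios `aₙ₊₁/aₙ` converge either to `1` or to `1/2`. -/
theorem ratio_dichotomy_d3 (lam : ℂ) (hre : 0 ≤ lam.re) (a : ℕ → ℂ)
    (ha0 : a 0 = 1) (ha1 : a 1 = A3 lam (-1))
    (harec : ∀ n : ℕ, a (n + 2) = A3 lam n * a (n + 1) + B3 lam n * a n) :
    (∃ N : ℕ, ∀ n ≥ N, a n ≠ 0) ∧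
      (Filter.Tendsto (fun n => a (n + 1) / a n) Filter.atTop (nhds 1) ∨
        Filter.Tendsto (fun n => a (n + 1) / a n) Filter.atTop (nhds (1 / 2))) := by

  classical
  set x : ℕ → ℂ := fun n => a (n+1) - (1/2) * a n with hxdef
  set y : ℕ → ℂ := fun n => a (n+1) - a n with hydef
  -- not both a n, a (n+1) zero
  have ha_nz : ∀ n, a n ≠ 0 ∨ a (n+1) ≠ 0 := by
    intro n
    induction n with
    | zero => left; rw [ha0]; exact one_ne_zero
    | succ n ih =>
      by_contra hcc
      push_neg at hcc
      obtain ⟨h1, h2⟩ := hcc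
      have h3 := harec n
      rw [h1, h2, mul_zero, zero_add] at h3
      have h4 : a n = 0 := by
        rcases mul_eq_zero.mp h3.symm with h | h
        · exact absurd h (B3_ne lam hre n)
        · exact h
      rcases ih with h | h
      · exact h h4
      · exact h h1
  have hnz : ∀ n, ¬(x n = 0 ∧ y n = 0) := by
    intro n ⟨h1, h2⟩
    simp only [hxdef, hydef] at h1 h2
    have ha1' : a n = 0 := by linear_combination 2*h1 - 2*h2
    have ha2' : a (n+1) = 0 := by linear_combination h2 + ha1'
    rcases ha_nz n with h | h
    · exact h ha1'
    · exact h ha2'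
  -- coefficient limits
  have hα : Tendsto (fun n : ℕ => 2 * A3 lam n + 2 * B3 lam n - 1) atTop (nhds 1) := by
    have := (((A3_tendsto lam).const_mul 2).add ((B3_tendsto lam).const_mul 2)).sub_const 1
    norm_num at this
    convert this using 2 <;> norm_num
  have hβ : Tendsto (fun n : ℕ => 1/2 - A3 lam n - 2 * B3 lam n) atTop (nhds 0) := by
    have := (((A3_tendsto lam).const_sub (1/2)).sub ((B3_tendsto lam).const_mul 2))
    norm_num at this
    convert this using 2 <;> norm_num
  have hγ : Tendsto (fun n : ℕ => 2 * A3 lam n + 2 * B3 lam n - 2) atTop (nhds 0) := by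
    have := (((A3_tendsto lam).const_mul 2).add ((B3_tendsto lam).const_mul 2)).sub_const 2
    norm_num at this
    convert this using 2 <;> norm_num
  have hδ : Tendsto (fun n : ℕ => 1 - A3 lam n - 2 * B3 lam n) atTop (nhds (1/2)) := by
    have := (((A3_tendsto lam).const_sub 1).sub ((B3_tendsto lam).const_mul 2))
    norm_num at this
    convert this using 2 <;> norm_num
  -- recurrences for x, y
  have hxrec : ∀ n : ℕ, x (n+1) = (2 * A3 lam n + 2 * B3 lam n - 1) * x n
      + (1/2 - A3 lam n - 2 * B3 lam n) * y n := by
    intro n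
    simp only [hxdef, hydef]
    rw [harec n]
    ring
  have hyrec : ∀ n : ℕ, y (n+1) = (2 * A3 lam n + 2 * B3 lam n - 2) * x n
      + (1 - A3 lam n - 2 * B3 lam n) * y n := by
    intro n
    simp only [hxdef, hydef]
    rw [harec n]
    ring
  -- step estimates
  have hbnd : ∀ ε : ℝ, 0 < ε → ∃ N, ∀ n ≥ N, StepEst x y ε n := by
    intro ε hε
    have h1 := (Metric.tendsto_atTop.mp hα) ε hε
    have h2 := (Metric.tendsto_atTop.mp hβ) ε hε
    have h3 := (Metric.tendsto_atTop.mp hγ) ε hε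
    have h4 := (Metric.tendsto_atTop.mp hδ) ε hε
    obtain ⟨N1, hN1⟩ := h1
    obtain ⟨N2, hN2⟩ := h2
    obtain ⟨N3, hN3⟩ := h3
    obtain ⟨N4, hN4⟩ := h4
    refine ⟨max (max N1 N2) (max N3 N4), fun n hn => ?_⟩
    have e1 : ‖(2 * A3 lam n + 2 * B3 lam n - 1) - 1‖ < ε := by
      have := hN1 n (le_trans (le_trans (le_max_left _ _) (le_max_left _ _)) hn)
      rwa [dist_eq_norm] at this
    have e2 : ‖(1/2 - A3 lam n - 2 * B3 lam n) - 0‖ < ε := by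
      have := hN2 n (le_trans (le_trans (le_max_right _ _) (le_max_left _ _)) hn)
      rwa [dist_eq_norm] at this
    have e3 : ‖(2 * A3 lam n + 2 * B3 lam n - 2) - 0‖ < ε := by
      have := hN3 n (le_trans (le_trans (le_max_left _ _) (le_max_right _ _)) hn)
      rwa [dist_eq_norm] at this
    have e4 : ‖(1 - A3 lam n - 2 * B3 lam n) - 1/2‖ < ε := by
      have := hN4 n (le_trans (le_trans (le_max_right _ _) (le_max_right _ _)) hn)
      rwa [dist_eq_norm] at this
    rw [sub_zero] at e2 e3
    constructor
    · have heq : x (n+1) - x n = ((2 * A3 lam n + 2 * B3 lam n - 1) - 1) * x n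
          + (1/2 - A3 lam n - 2 * B3 lam n) * y n := by
        rw [hxrec n]; ring
      rw [heq]
      calc ‖_ + _‖ ≤ ‖((2 * A3 lam n + 2 * B3 lam n - 1) - 1) * x n‖
            + ‖(1/2 - A3 lam n - 2 * B3 lam n) * y n‖ := norm_add_le _ _
        _ ≤ ε * ‖x n‖ + ε * ‖y n‖ := by
            rw [norm_mul, norm_mul]
            have := norm_nonneg (x n); have := norm_nonneg (y n)
            have g1 : ‖(2 * A3 lam n + 2 * B3 lam n - 1) - 1‖ * ‖x n‖ ≤ ε * ‖x n‖ :=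
              mul_le_mul_of_nonneg_right e1.le (norm_nonneg _)
            have g2 : ‖1/2 - A3 lam n - 2 * B3 lam n‖ * ‖y n‖ ≤ ε * ‖y n‖ :=
              mul_le_mul_of_nonneg_right e2.le (norm_nonneg _)
            linarith
        _ = ε * (‖x n‖ + ‖y n‖) := by ring
    · have heq : y (n+1) - (1/2 : ℂ) * y n = (2 * A3 lam n + 2 * B3 lam n - 2) * x n
          + ((1 - A3 lam n - 2 * B3 lam n) - 1/2) * y n := by
        rw [hyrec n]; ring
      rw [heq]
      calc ‖_ + _‖ ≤ ‖(2 * A3 lam n + 2 * B3 lam n - 2) * x n‖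
            + ‖((1 - A3 lam n - 2 * B3 lam n) - 1/2) * y n‖ := norm_add_le _ _
        _ ≤ ε * ‖x n‖ + ε * ‖y n‖ := by
            rw [norm_mul, norm_mul]
            have g1 : ‖2 * A3 lam n + 2 * B3 lam n - 2‖ * ‖x n‖ ≤ ε * ‖x n‖ :=
              mul_le_mul_of_nonneg_right e3.le (norm_nonneg _)
            have g2 : ‖(1 - A3 lam n - 2 * B3 lam n) - 1/2‖ * ‖y n‖ ≤ ε * ‖y n‖ :=
              mul_le_mul_of_nonneg_right e4.le (norm_nonneg _)
            linarith
        _ = ε * (‖x n‖ + ‖y n‖) := by ring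
  obtain ⟨⟨N, hN⟩, hd⟩ := dichotomy x y hbnd hnz
  constructor
  · refine ⟨N, fun n hn => ?_⟩
    have h := hN n hn
    intro h0
    apply h
    simp only [hxdef, hydef]
    rw [h0] at *
    simp only [hxdef, hydef] at h ⊢
    linear_combination (1/2 : ℂ) * h0
  · have hfeq : (fun n => a (n+1) / a n) = (fun n => (2*x n - y n) / (2*x n - 2*y n)) := by
      funext n
      have h1 : 2*x n - y n = a (n+1) := by simp only [hxdef, hydef]; ring
      have h2 : 2*x n - 2*y n = a n := by simp only [hxdef, hydef]; ring
      rw [h1, h2]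
    rw [hfeq]
    exact hd
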